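/- (Ditor) Let n be a positive integer and let κ be an infinite cardinal. If P is a join-semilattice of breadth at most n in which every principal ideal {y ∈ P : y ≤ x} has cardinality strictly less than κ, then the cardinality of P is at most κ^{+(n-1)}, the (n-1)-st successor cardinal of κ. -/

import Mathlib

open Cardinal Set Order

universe u

namespace DitorAux

variable {P : Type u} [SemilatticeSup P]

/-- Downward closure of finite suprema of elements of `B`. -/
def cl (B : Set P) : Set P :=
  {x | ∃ F : Finset P, ↑F ⊆ B ∧ ∃ h : F.Nonempty, x ≤ F.sup' h id}

theorem mk_finset_le (α : Type u) : #(Finset α) ≤ max #α ℵ₀ := by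
  rcases finite_or_infinite α with h | h
  · have : Finite (Finset α) := by cases nonempty_fintype α; infer_instance
    exact le_trans (le_of_lt (mk_lt_aleph0_iff.2 this)) (le_max_right _ _)
  · rw [mk_finset_of_infinite]
    exact le_max_left _ _

theorem mk_cl_le {κ : Cardinal.{u}} (hprin : ∀ x : P, #(Iic x) < κ)
    (B : Set P) : #(cl B) ≤ max #B ℵ₀ * κ := by
  classical
  have hsub : cl B ⊆ ⋃ F : {F : Finset P // ↑F ⊆ B ∧ F.Nonempty},
      Iic (F.1.sup' F.2.2 id) := by
    rintro x ⟨F, hFB, hFne, hx⟩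
    exact mem_iUnion.2 ⟨⟨F, hFB, hFne⟩, hx⟩
  have h1 : #(cl B) ≤ #{F : Finset P // ↑F ⊆ B ∧ F.Nonempty} * κ := by
    calc #(cl B) ≤ #(⋃ F : {F : Finset P // ↑F ⊆ B ∧ F.Nonempty},
        Iic (F.1.sup' F.2.2 id)) := mk_le_mk_of_subset hsub
      _ ≤ Cardinal.sum (fun F : {F : Finset P // ↑F ⊆ B ∧ F.Nonempty} =>
          #(Iic (F.1.sup' F.2.2 id))) := mk_iUnion_le_sum_mk
      _ ≤ Cardinal.sum (fun _ : {F : Finset P // ↑F ⊆ B ∧ F.Nonempty} => κ) :=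
          Cardinal.sum_le_sum _ _ (fun F => (hprin _).le)
      _ = _ * κ := sum_const' _ _
  have h2 : #{F : Finset P // ↑F ⊆ B ∧ F.Nonempty} ≤ max #B ℵ₀ := by
    have hinj : Function.Injective
        (fun F : {F : Finset P // ↑F ⊆ B ∧ F.Nonempty} => F.1.subtype (· ∈ B)) := by
      intro F G hFG
      apply Subtype.ext
      have hF : (F.1.subtype (· ∈ B)).map (Function.Embedding.subtype _) = F.1 := by
        rw [Finset.subtype_map, Finset.filter_true_of_mem (fun x hx => F.2.1 hx)]
      have hG : (G.1.subtype (· ∈ B)).map (Function.Embedding.subtype _) = G.1 := by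
        rw [Finset.subtype_map, Finset.filter_true_of_mem (fun x hx => G.2.1 hx)]
      rw [← hF, ← hG]
      exact congrArg _ hFG
    calc #{F : Finset P // ↑F ⊆ B ∧ F.Nonempty} ≤ #(Finset ↥B) := mk_le_of_injective hinj
      _ ≤ max #↥B ℵ₀ := mk_finset_le _
  exact h1.trans (mul_le_mul_left h2 κ)

theorem exists_notin_cl {κ μ : Cardinal.{u}} (hκ : ℵ₀ ≤ κ)
    (hprin : ∀ x : P, #(Iic x) < κ) (hκμ : κ < μ) (hμ : μ ≤ #P)
    {B : Set P} (hB : #B < μ) : ∃ x : P, x ∉ cl B := by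
  have h1 : #(cl B) < μ := by
    refine lt_of_le_of_lt (mk_cl_le hprin B) ?_
    rw [mul_eq_max (le_max_right _ _) hκ]
    exact max_lt (max_lt hB (lt_of_le_of_lt hκ hκμ)) hκμ
  by_contra hc
  push_neg at hc
  have huniv : cl B = Set.univ := Set.eq_univ_of_forall hc
  rw [huniv, Cardinal.mk_univ] at h1
  exact absurd hμ (not_le.2 h1)

/-- A well-indexed sequence is free if no term is below the supremum of finitely
many earlier terms. -/
def Free {I : Type u} [LinearOrder I] (b : I → P) : Prop :=
  ∀ i : I, ∀ F : Finset I, ↑F ⊆ Set.Iio i → ∀ h : F.Nonempty, ¬ b i ≤ F.sup' h b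

theorem Free.not_le {I : Type u} [LinearOrder I] {b : I → P} (hb : Free b)
    {i j : I} (hij : i < j) : ¬ b j ≤ b i := by
  have := hb j {i} (by simpa using hij) ⟨i, Finset.mem_singleton_self i⟩
  simpa using this

theorem Free.injective {I : Type u} [LinearOrder I] {b : I → P} (hb : Free b) :
    Function.Injective b := by
  intro i j hij
  rcases lt_trichotomy i j with h | h | h
  · exact absurd (le_of_eq hij.symm) (hb.not_le h)
  · exact h
  · exact absurd (le_of_eq hij) (hb.not_le h)

theorem exists_free {κ μ : Cardinal.{u}} (hκ : ℵ₀ ≤ κ)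
    (hprin : ∀ x : P, #(Iic x) < κ) (hκμ : κ < μ) (hμ : μ ≤ #P) :
    ∃ b : μ.ord.ToType → P, Free b := by
  classical
  haveI hPne : Nonempty P :=
    Cardinal.mk_ne_zero_iff.1 (aleph0_pos.trans_le (hκ.trans (hκμ.le.trans hμ))).ne'
  have wf : WellFounded ((· < ·) : μ.ord.ToType → μ.ord.ToType → Prop) := wellFounded_lt
  set G : ∀ i : μ.ord.ToType, (∀ j, j < i → P) → P := fun i ih =>
    Classical.epsilon (fun x => x ∉ cl {y | ∃ j, ∃ h : j < i, ih j h = y}) with hG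
  set b : μ.ord.ToType → P := wf.fix G with hbdef
  have hfix : ∀ i, b i = G i (fun j _ => b j) := fun i => wf.fix_eq G i
  have key : ∀ i, b i ∉ cl {y | ∃ j, ∃ _h : j < i, b j = y} := by
    intro i
    have hset : {y | ∃ j, ∃ _h : j < i, b j = y} = b '' Iio i := by
      ext y
      constructor
      · rintro ⟨j, hj, rfl⟩; exact ⟨j, hj, rfl⟩
      · rintro ⟨j, hj, rfl⟩; exact ⟨j, hj, rfl⟩
    have hcard : #({y | ∃ j, ∃ _h : j < i, b j = y} : Set P) < μ := by
      rw [hset]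
      exact lt_of_le_of_lt mk_image_le (mk_Iio_ord_toType i)
    obtain ⟨x, hx⟩ := exists_notin_cl hκ hprin hκμ hμ hcard
    have hspec := Classical.epsilon_spec
      (p := fun x : P => x ∉ cl {y | ∃ j, ∃ _h : j < i, b j = y}) ⟨x, hx⟩
    rw [hfix i]
    exact hspec
  refine ⟨b, ?_⟩
  intro i F hF h hle
  apply key i
  refine ⟨F.image b, ?_, h.image b, ?_⟩
  · intro y hy
    rcases Finset.mem_image.1 (Finset.mem_coe.1 hy) with ⟨j, hj, rfl⟩
    exact ⟨j, hF hj, rfl⟩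
  · rw [Finset.sup'_image]
    exact hle

theorem exists_Iio_card {I : Type u} [LinearOrder I] [WellFoundedLT I] {c : Cardinal.{u}}
    (h : c < #I) : ∃ η : I, #(Iio η) = c := by
  have h1 : c.ord < Ordinal.type ((· < ·) : I → I → Prop) := by
    refine lt_of_lt_of_le (Cardinal.ord_lt_ord.2 h) ?_
    rw [Cardinal.ord_le, Ordinal.card_type]
  refine ⟨Ordinal.enum (· < ·) ⟨c.ord, h1⟩, ?_⟩
  have h2 := Ordinal.typein_enum ((· < ·) : I → I → Prop) h1
  show #{y : I // y < Ordinal.enum (· < ·) ⟨c.ord, h1⟩} = c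
  rw [← Ordinal.card_typein, h2, Cardinal.card_ord]

/-- An irredundant finite set: no element is below the supremum of finitely many
of the other elements. -/
def IsIrred (X : Finset P) : Prop :=
  ∀ x ∈ X, ∀ F : Finset P, ↑F ⊆ (↑X : Set P) \ {x} → ∀ h : F.Nonempty,
    ¬ x ≤ F.sup' h id

theorem le_iterate_succ (κ : Cardinal.{u}) (m : ℕ) : κ ≤ succ^[m] κ := by
  induction m with
  | zero => exact le_rfl
  | succ k ih => rw [Function.iterate_succ_apply']; exact ih.trans (le_succ _)

theorem lt_iterate_succ (κ : Cardinal.{u}) {m : ℕ} (hm : 1 ≤ m) : κ < succ^[m] κ := by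
  obtain ⟨k, rfl⟩ := Nat.exists_eq_add_of_le hm
  rw [add_comm, Function.iterate_succ_apply']
  exact (le_iterate_succ κ k).trans_lt (lt_succ _)

end DitorAux

section MainLemma

open DitorAux

set_option maxHeartbeats 1000000 in
theorem ditor_main_lemma : ∀ (m : ℕ), 1 ≤ m →
    ∀ (P : Type u) (_ : SemilatticeSup P) (κ : Cardinal.{u}), ℵ₀ ≤ κ →
    (∀ x : P, #(Iic x) < κ) →
    ∀ (I : Type u) (_ : LinearOrder I) (_ : WellFoundedLT I) (b : I → P), Free b →
    succ^[m] κ ≤ #I →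
    ∃ X : Finset P, X.card = m + 1 ∧ ↑X ⊆ Set.range b ∧ IsIrred X := by
  intro m hm
  induction m, hm using Nat.le_induction with
  | base =>
    intro P _ κ hκ hprin I _ _ b hb hI
    classical
    by_cases hcmp : ∃ i j : I, i < j ∧ ¬ b i ≤ b j
    · obtain ⟨i, j, hij, hji⟩ := hcmp
      have hne : b i ≠ b j := fun h => hji h.le
      refine ⟨{b i, b j}, ?_, ?_, ?_⟩
      · rw [Finset.card_insert_of_notMem (by simpa using hne), Finset.card_singleton]
      · intro x hx
        rcases Finset.mem_insert.1 hx with h | h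
        · exact ⟨i, h.symm⟩
        · exact ⟨j, (Finset.mem_singleton.1 h).symm⟩
      · intro x hx F hF h hle
        rcases Finset.mem_insert.1 hx with rfl | hx'
        · have hs : F.sup' h id ≤ b j := by
            refine (Finset.sup'_le_iff h _).2 (fun y hy => ?_)
            obtain ⟨hyX, hyne⟩ := hF hy
            rcases Finset.mem_insert.1 (Finset.mem_coe.1 hyX) with rfl | h1
            · exact absurd (Set.mem_singleton _) hyne
            · rw [Finset.mem_singleton.1 h1]
              exact le_rfl
          exact hji (hle.trans hs)
        · rcases Finset.mem_singleton.1 hx' with rfl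
          have hs : F.sup' h id ≤ b i := by
            refine (Finset.sup'_le_iff h _).2 (fun y hy => ?_)
            obtain ⟨hyX, hyne⟩ := hF hy
            rcases Finset.mem_insert.1 (Finset.mem_coe.1 hyX) with rfl | h1
            · exact le_rfl
            · exact absurd (by rw [Finset.mem_singleton.1 h1]; exact Set.mem_singleton _) hyne
          exact hb.not_le hij (hle.trans hs)
    · push_neg at hcmp
      have hκI : κ < #I := (lt_iterate_succ κ le_rfl).trans_le hI
      obtain ⟨η, hη⟩ := exists_Iio_card hκI
      exfalso
      have h1 : b '' Iio η ⊆ Iic (b η) := by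
        rintro _ ⟨j, hj, rfl⟩
        exact hcmp j η hj
      have h2 : κ ≤ #(Iic (b η)) := by
        calc κ = #(Iio η) := hη.symm
          _ = #(b '' Iio η) := (mk_image_eq hb.injective).symm
          _ ≤ #(Iic (b η)) := mk_le_mk_of_subset h1
      exact absurd (hprin (b η)) (not_lt.2 h2)
  | succ m hm IH =>
    intro P _ κ hκ hprin I _ _ b hb hI
    classical
    set lam := succ^[m] κ with hlam
    have hκlam : κ < lam := lt_iterate_succ κ hm
    have hlamI : lam < #I := by
      refine lt_of_lt_of_le ?_ hI
      rw [Function.iterate_succ_apply']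
      exact lt_succ _
    have hlaminf : ℵ₀ ≤ lam := hκ.trans hκlam.le
    obtain ⟨η, hη⟩ := exists_Iio_card hlamI
    have wfI : WellFounded ((· < ·) : I → I → Prop) := wellFounded_lt
    set KeepF : ∀ i : I, (∀ j, j < i → Prop) → Prop := fun i ih =>
      i < η ∧ ∀ F : Finset I, (∀ j ∈ F, ∃ h : j < i, ih j h) →
        ¬ b i ≤ (insert (b η) (F.image b)).sup' (Finset.insert_nonempty _ _) id with hKeepF
    set Keep : I → Prop := wfI.fix KeepF with hKeepDef
    have hKeep : ∀ i, Keep i ↔ (i < η ∧ ∀ F : Finset I, (∀ j ∈ F, ∃ _h : j < i, Keep j) →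
        ¬ b i ≤ (insert (b η) (F.image b)).sup' (Finset.insert_nonempty _ _) id) := by
      intro i
      exact Iff.of_eq (wfI.fix_eq KeepF i)
    have keep_lt : ∀ i, Keep i → i < η := fun i hi => ((hKeep i).1 hi).1
    have keep_free : ∀ i, Keep i → ∀ F : Finset I, (∀ j ∈ F, j < i ∧ Keep j) →
        ¬ b i ≤ (insert (b η) (F.image b)).sup' (Finset.insert_nonempty _ _) id := by
      intro i hi F hF
      exact ((hKeep i).1 hi).2 F (fun j hj => ⟨(hF j hj).1, (hF j hj).2⟩)
    have keep_not_le : ∀ i, Keep i → ¬ b i ≤ b η := by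
      intro i hi hle
      have h := keep_free i hi ∅ (by simp)
      exact h (le_trans hle (Finset.le_sup' id (Finset.mem_insert_self _ _)))
    have cover : ∀ i, i < η → ∃ F : Finset I, (∀ j ∈ F, Keep j) ∧
        b i ≤ (insert (b η) (F.image b)).sup' (Finset.insert_nonempty _ _) id := by
      intro i hi
      by_cases hk : Keep i
      · refine ⟨{i}, by simpa using hk, ?_⟩
        refine Finset.le_sup' id ?_
        simp
      · have hk2 : ¬ (i < η ∧ ∀ F : Finset I, (∀ j ∈ F, ∃ _h : j < i, Keep j) →
            ¬ b i ≤ (insert (b η) (F.image b)).sup' (Finset.insert_nonempty _ _) id) :=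
          fun hc => hk ((hKeep i).2 hc)
        push_neg at hk2
        obtain ⟨F, hF1, hF2⟩ := hk2 hi
        refine ⟨F, fun j hj => ?_, hF2⟩
        obtain ⟨_, hkj⟩ := hF1 j hj
        exact hkj
    -- counting: the kept set has cardinality at least lam
    have hbig : lam ≤ #{i : I // Keep i} := by
      by_contra hsmall
      push_neg at hsmall
      set B : Set P := insert (b η) (b '' {i | Keep i}) with hB
      have hcov : b '' Iio η ⊆ cl B := by
        rintro _ ⟨i, hi, rfl⟩
        obtain ⟨F, hF1, hF2⟩ := cover i hi
        refine ⟨insert (b η) (F.image b), ?_, Finset.insert_nonempty _ _, hF2⟩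
        intro y hy
        rcases Finset.mem_insert.1 (Finset.mem_coe.1 hy) with rfl | hy'
        · exact Set.mem_insert _ _
        · rcases Finset.mem_image.1 hy' with ⟨j, hj, rfl⟩
          exact Set.mem_insert_of_mem _ ⟨j, hF1 j hj, rfl⟩
      have hBcard : #B < lam := by
        have h1 : #B ≤ #(b '' {i | Keep i}) + 1 := mk_insert_le
        have h2 : #(b '' {i | Keep i}) ≤ #{i : I // Keep i} := mk_image_le
        refine lt_of_le_of_lt (h1.trans (add_le_add_left h2 1)) ?_
        exact Cardinal.add_lt_of_lt hlaminf hsmall (lt_of_lt_of_le one_lt_aleph0 hlaminf)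
      have hclcard : #(cl B) < lam := by
        refine lt_of_le_of_lt (mk_cl_le hprin B) ?_
        rw [mul_eq_max (le_max_right _ _) hκ]
        exact max_lt (max_lt hBcard (lt_of_le_of_lt hκ hκlam)) hκlam
      have hIm : lam ≤ #(cl B) := by
        calc lam = #(Iio η) := hη.symm
          _ = #(b '' Iio η) := (mk_image_eq hb.injective).symm
          _ ≤ #(cl B) := mk_le_mk_of_subset hcov
      exact absurd hIm (not_le.2 hclcard)
    -- the quotient semilattice above b η
    have hprin' : ∀ x : ↥(Ici (b η)), #(Iic x) < κ := by
      intro x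
      have hinj : Function.Injective
          (fun y : (Iic x : Set ↥(Ici (b η))) => (⟨y.1.1, y.2⟩ : (Iic (x : P) : Set P))) := by
        intro y z hyz
        simp only [Subtype.mk_eq_mk] at hyz
        have hyz' := congrArg Subtype.val hyz
        exact Subtype.ext (Subtype.ext hyz')
      exact lt_of_le_of_lt (mk_le_of_injective hinj) (hprin (x : P))
    set c : {i : I // Keep i} → ↥(Ici (b η)) := fun j => ⟨b j.1 ⊔ b η, le_sup_right⟩ with hc
    -- a SupHom for computing sups of coercions
    set V : SupHom ↥(Ici (b η)) P := ⟨fun x => (x : P), fun x y => rfl⟩ with hV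
    have hVs : ∀ (F : Finset ↥(Ici (b η))) (h : F.Nonempty),
        ((F.sup' h id : ↥(Ici (b η))) : P) = F.sup' h (fun x => (x : P)) := by
      intro F h
      exact map_finset_sup' V h (id : ↥(Ici (b η)) → ↥(Ici (b η)))
    have hfree' : Free c := by
      intro i F hF h hle
      have hle2 : ((c i : ↥(Ici (b η))) : P) ≤ ((F.sup' h c : ↥(Ici (b η))) : P) := hle
      have hcsup : ((F.sup' h c : ↥(Ici (b η))) : P) = F.sup' h (fun j => b j.1 ⊔ b η) := by
        exact map_finset_sup' V h c
      rw [hcsup] at hle2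
      have hle3 : b i.1 ≤ F.sup' h (fun j => b j.1 ⊔ b η) :=
        le_trans le_sup_left hle2
      set F0 : Finset I := F.image (fun j : {i : I // Keep i} => j.1) with hF0
      have hF0ne : F0.Nonempty := h.image _
      have heq : (insert (b η) (F0.image b)).sup' (Finset.insert_nonempty _ _) id =
          b η ⊔ F.sup' h (fun j => b j.1) := by
        apply le_antisymm
        · refine (Finset.sup'_le_iff _ _).2 (fun y hy => ?_)
          rcases Finset.mem_insert.1 hy with rfl | hy'
          · exact le_sup_left
          · rcases Finset.mem_image.1 hy' with ⟨j0, hj0, rfl⟩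
            rcases Finset.mem_image.1 hj0 with ⟨j1, hj1, rfl⟩
            show (b j1.1 : P) ≤ b η ⊔ F.sup' h (fun j => b j.1)
            exact le_sup_of_le_right (Finset.le_sup' (fun j => b j.1) hj1)
        · refine sup_le (Finset.le_sup' id (Finset.mem_insert_self _ _)) ?_
          refine (Finset.sup'_le_iff h _).2 (fun j hj => ?_)
          refine Finset.le_sup' id ?_
          refine Finset.mem_insert_of_mem ?_
          exact Finset.mem_image_of_mem b (Finset.mem_image_of_mem _ hj)
      have hsup_eq : F.sup' h (fun j => b j.1 ⊔ b η) = b η ⊔ F.sup' h (fun j => b j.1) := by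
        apply le_antisymm
        · refine (Finset.sup'_le_iff h _).2 (fun j hj => ?_)
          exact sup_le (le_sup_of_le_right (Finset.le_sup' (fun j => b j.1) hj)) le_sup_left
        · refine sup_le ?_ ?_
          · obtain ⟨j0, hj0⟩ := h
            exact le_trans le_sup_right (Finset.le_sup' (fun j => b j.1 ⊔ b η) hj0)
          · refine (Finset.sup'_le_iff h _).2 (fun j hj => ?_)
            exact le_trans le_sup_left (Finset.le_sup' (fun j => b j.1 ⊔ b η) hj)
      have hbad : b i.1 ≤ (insert (b η) (F0.image b)).sup' (Finset.insert_nonempty _ _) id := by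
        rw [heq, ← hsup_eq]
        exact hle3
      refine keep_free i.1 i.2 F0 ?_ hbad
      intro j hj
      rcases Finset.mem_image.1 hj with ⟨j', hj', rfl⟩
      exact ⟨hF hj', j'.2⟩
    have hI'card : succ^[m] κ ≤ #{i : I // Keep i} := hbig
    obtain ⟨X', hX'card, hX'range, hX'irr⟩ :=
      IH ↥(Ici (b η)) inferInstance κ hκ hprin' {i : I // Keep i} inferInstance
        inferInstance c hfree' hI'card
    -- choose index witnesses
    have hX'ne : X'.Nonempty := Finset.card_pos.1 (by rw [hX'card]; omega)
    set gI : ↥(Ici (b η)) → I := fun x =>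
      if h : ∃ j : {i : I // Keep i}, c j = x then (Classical.choose h).1 else η with hgI
    have hgI_spec : ∀ x ∈ X', Keep (gI x) ∧ b (gI x) ⊔ b η = (x : P) := by
      intro x hx
      have hx' : ∃ j : {i : I // Keep i}, c j = x := by
        rcases hX'range hx with ⟨j, hj⟩
        exact ⟨j, hj⟩
      rw [hgI]
      simp only [dif_pos hx']
      refine ⟨(Classical.choose hx').2, ?_⟩
      have hcs := Classical.choose_spec hx'
      exact congrArg Subtype.val hcs
    set Y : Finset P := X'.image (fun x => b (gI x)) with hY
    have hinjY : Set.InjOn (fun x => b (gI x)) ↑X' := by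
      intro x hx y hy hxy
      have h1 := (hgI_spec x hx).2
      have h2 := (hgI_spec y hy).2
      have hxy' : b (gI x) = b (gI y) := hxy
      apply Subtype.ext
      rw [← h1, ← h2, hxy']
    have hYcard : Y.card = m + 1 := by
      rw [hY, Finset.card_image_of_injOn hinjY, hX'card]
    have hbηY : b η ∉ Y := by
      intro hmem
      rcases Finset.mem_image.1 hmem with ⟨x, hx, hbx⟩
      exact keep_not_le (gI x) (hgI_spec x hx).1 (le_of_eq hbx)
    refine ⟨insert (b η) Y, ?_, ?_, ?_⟩
    · rw [Finset.card_insert_of_notMem hbηY, hYcard]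
    · intro z hz
      rcases Finset.mem_insert.1 (Finset.mem_coe.1 hz) with rfl | hz'
      · exact ⟨η, rfl⟩
      · rcases Finset.mem_image.1 hz' with ⟨x, hx, rfl⟩
        exact ⟨gI x, rfl⟩
    · -- irredundance
      intro z hzX F hFsub h hle
      rcases Finset.mem_insert.1 hzX with rfl | hzY
      · -- z = b η
        set F0 : Finset I := X'.image (fun x => gI x) with hF0
        have hF0ne : F0.Nonempty := hX'ne.image _
        have hF0sub : ↑F0 ⊆ Set.Iio η := by
          intro j hj
          rcases Finset.mem_image.1 (Finset.mem_coe.1 hj) with ⟨x, hx, rfl⟩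
          exact keep_lt _ (hgI_spec x hx).1
        refine hb η F0 hF0sub hF0ne ?_
        refine le_trans hle ?_
        refine (Finset.sup'_le_iff h _).2 (fun y hy => ?_)
        have hy' : y ∈ Y := by
          obtain ⟨hyX, hyne⟩ := hFsub hy
          rcases Finset.mem_insert.1 (Finset.mem_coe.1 hyX) with rfl | hmem
          · exact absurd (Set.mem_singleton _) hyne
          · exact hmem
        rcases Finset.mem_image.1 hy' with ⟨x, hx, rfl⟩
        show (b (gI x) : P) ≤ F0.sup' hF0ne b
        refine Finset.le_sup' b ?_
        exact Finset.mem_image_of_mem _ hx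
      · -- z ∈ Y
        rcases Finset.mem_image.1 hzY with ⟨x0, hx0, rfl⟩
        have hx0e : (X'.erase x0).Nonempty := by
          refine Finset.card_pos.1 ?_
          rw [Finset.card_erase_of_mem hx0, hX'card]
          omega
        set R : P := (X'.erase x0).sup' hx0e (fun x => (x : P)) with hR
        have hbηR : b η ≤ R := by
          obtain ⟨x1, hx1⟩ := hx0e
          have hx1' := (hgI_spec x1 (Finset.mem_of_mem_erase hx1)).2
          refine le_trans ?_ (Finset.le_sup' (fun x => ((x : ↥(Ici (b η))) : P)) hx1)
          rw [← hx1']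
          exact le_sup_right
        have hsup_le : F.sup' h id ≤ R := by
          refine (Finset.sup'_le_iff h _).2 (fun y hy => ?_)
          obtain ⟨hyX, hyne⟩ := hFsub hy
          rcases Finset.mem_insert.1 (Finset.mem_coe.1 hyX) with rfl | hyY
          · exact hbηR
          · rcases Finset.mem_image.1 hyY with ⟨x, hx, rfl⟩
            have hxx0 : x ≠ x0 := by
              intro hcontr
              refine (by simpa using hyne : ¬ (b (gI x) = b (gI x0))) ?_
              rw [hcontr]
            have hxmem : x ∈ X'.erase x0 := Finset.mem_erase.2 ⟨hxx0, hx⟩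
            have hxs := (hgI_spec x hx).2
            show (b (gI x) : P) ≤ R
            refine le_trans ?_ (Finset.le_sup' (fun x => ((x : ↥(Ici (b η))) : P)) hxmem)
            rw [← hxs]
            exact le_sup_left
        have hcoe : ((x0 : ↥(Ici (b η))) : P) ≤ R := by
          rw [← (hgI_spec x0 hx0).2]
          exact sup_le (le_trans hle hsup_le) hbηR
        refine hX'irr x0 hx0 (X'.erase x0) ?_ hx0e ?_
        · intro y hy
          obtain ⟨hyne, hyX⟩ := Finset.mem_erase.1 (Finset.mem_coe.1 hy)
          exact ⟨hyX, by simpa using hyne⟩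
        · have hR' : (((X'.erase x0).sup' hx0e id : ↥(Ici (b η))) : P) = R := hVs _ _
          have hfin : ((x0 : ↥(Ici (b η))) : P) ≤ (((X'.erase x0).sup' hx0e id : ↥(Ici (b η))) : P) := by
            rw [hR']
            exact hcoe
          exact hfin

end MainLemma

/-- `P` has breadth at most `n`: every nonempty finite subset `X` of `P` has a
subset `Y` with at most `n` elements and the same supremum. -/
def HasBreadthAtMost (P : Type*) [SemilatticeSup P] (n : ℕ) : Prop :=
  ∀ (X : Finset P) (hX : X.Nonempty),
    ∃ (Y : Finset P) (hY : Y.Nonempty), Y ⊆ X ∧ Y.card ≤ n ∧ X.sup' hX id = Y.sup' hY id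

/-- Ditor: if `P` is a join-semilattice of breadth at most `n > 0`
whose principal ideals all have cardinality `< κ` (κ infinite), then
`|P| ≤ κ^{+(n-1)}`, the `(n-1)`-st successor cardinal of `κ`. -/
theorem ditor_cardinality_bound {P : Type u} [SemilatticeSup P] [Nonempty P]
    (n : ℕ) (hn : 0 < n) (κ : Cardinal.{u}) (hκ : Cardinal.aleph0 ≤ κ)
    (hbr : HasBreadthAtMost P n)
    (hprin : ∀ x : P, Cardinal.mk (Set.Iic x) < κ) :
    Cardinal.mk P ≤ Order.succ^[n - 1] κ := by
  classical
  by_contra hcon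
  have h1 : succ^[n] κ ≤ #P := by
    have h2 : succ^[n - 1] κ < #P := not_le.1 hcon
    have h3 : succ (succ^[n - 1] κ) ≤ #P := succ_le_of_lt h2
    have h4 : n = (n - 1) + 1 := (Nat.succ_pred_eq_of_pos hn).symm
    rw [h4, Function.iterate_succ_apply']
    exact h3
  have hκμ : κ < succ^[n] κ := DitorAux.lt_iterate_succ κ hn
  obtain ⟨b, hb⟩ := DitorAux.exists_free hκ hprin hκμ h1
  have hI : succ^[n] κ ≤ #((succ^[n] κ).ord.ToType) := by
    rw [Cardinal.mk_ord_toType]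
  obtain ⟨X, hX1, _, hX3⟩ :=
    ditor_main_lemma n hn P inferInstance κ hκ hprin _ inferInstance inferInstance b hb hI
  have hXne : X.Nonempty := Finset.card_pos.1 (by rw [hX1]; omega)
  obtain ⟨Y, hYne, hYX, hYcard, hsup⟩ := hbr X hXne
  have hex : ∃ x ∈ X, x ∉ Y := by
    by_contra hc
    push_neg at hc
    have hXY : X ⊆ Y := hc
    have := Finset.card_le_card hXY
    omega
  obtain ⟨x, hxX, hxY⟩ := hex
  have h5 : x ≤ X.sup' hXne id := Finset.le_sup' id hxX
  rw [hsup] at h5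
  refine hX3 x hxX Y ?_ hYne h5
  intro y hy
  refine ⟨hYX hy, ?_⟩
  intro hc
  rw [Set.mem_singleton_iff] at hc
  subst hc
  exact hxY hy
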